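/- If H is a connected graph in T_k (a tree on 2k-1 edges formed by joining k disjoint copies of P2 with k-1 connecting edges), and F is the set of those k-1 connecting edges, then |F| < the number of isolated P2 components of H \ F; hence H has no fractional P3-decomposition. -/

import Mathlib

open scoped Classical

noncomputable section

variable {V : Type*}

/-- `K` is a `P₃`-subgraph of `G`: an unordered pair of distinct incident edges of `G`. -/
def SimpleGraph.IsP3Sub (G : SimpleGraph V) (K : Sym2 (Sym2 V)) : Prop :=
  ∃ e₁ e₂ : Sym2 V, K = s(e₁, e₂) ∧ e₁ ∈ G.edgeSet ∧ e₂ ∈ G.edgeSet ∧ e₁ ≠ e₂ ∧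
    ∃ v : V, v ∈ e₁ ∧ v ∈ e₂

/-- A fractional `P₃`-decomposition of `G`. -/
def SimpleGraph.HasFracP3Decomp [Fintype V] (G : SimpleGraph V) : Prop :=
  ∃ f : Sym2 (Sym2 V) → ℝ,
    (∀ K, 0 ≤ f K ∧ f K ≤ 1) ∧
    ∀ e ∈ G.edgeSet,
      (∑ K ∈ Finset.univ.filter (fun K : Sym2 (Sym2 V) => G.IsP3Sub K ∧ e ∈ K), f K) = 1

/-- A connected component is an isolated `P₂`: a single edge together with its two endpoints. -/
def SimpleGraph.IsP2Component (G : SimpleGraph V) (c : G.ConnectedComponent) : Prop :=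
  ∃ u v : V, G.Adj u v ∧ c.supp = {u, v}
/-- `G` belongs to the family `T_k`: `G` is a tree with a set `F` of `k-1` edges whose removal
leaves exactly `k` disjoint copies of `P₂` (isolated single edges) as connected components. -/
def SimpleGraph.InTk [Fintype V] (G : SimpleGraph V) (k : ℕ) : Prop :=
  G.IsTree ∧ ∃ F : Finset (Sym2 V), ↑F ⊆ G.edgeSet ∧ F.card = k - 1 ∧
    (∀ c : (G.deleteEdges ↑F).ConnectedComponent, (G.deleteEdges ↑F).IsP2Component c) ∧
    Nat.card {c : (G.deleteEdges ↑F).ConnectedComponent //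
      (G.deleteEdges ↑F).IsP2Component c} = k

/-- Summing a nonnegative function over a `biUnion` is at most the double sum. -/
lemma sum_biUnion_le_real {α β : Type*} [DecidableEq β] (f : β → ℝ)
    (hf : ∀ b, 0 ≤ f b) (s : Finset α) (t : α → Finset β) :
    ∑ b ∈ s.biUnion t, f b ≤ ∑ a ∈ s, ∑ b ∈ t a, f b := by
  classical
  induction s using Finset.induction with
  | empty => simp
  | @insert a s ha ih =>
    rw [Finset.biUnion_insert, Finset.sum_insert ha]
    have h1 : ∑ b ∈ t a ∪ s.biUnion t, f b + ∑ b ∈ t a ∩ s.biUnion t, f b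
        = ∑ b ∈ t a, f b + ∑ b ∈ s.biUnion t, f b := Finset.sum_union_inter
    have h2 : 0 ≤ ∑ b ∈ t a ∩ s.biUnion t, f b :=
      Finset.sum_nonneg fun b _ => hf b
    linarith

/-- If `e` is an edge of `H \ F` all whose components are isolated `P₂`s, then any other
edge of `H` sharing a vertex with `e` must lie in `F`. -/
lemma key_in_F [Fintype V] (H : SimpleGraph V) (F : Finset (Sym2 V))
    (hall : ∀ c : (H.deleteEdges ↑F).ConnectedComponent,
      (H.deleteEdges ↑F).IsP2Component c)
    {e e' : Sym2 V} (he : e ∈ (H.deleteEdges ↑F).edgeSet) (he' : e' ∈ H.edgeSet)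
    (hne : e' ≠ e) {v : V} (hv : v ∈ e) (hv' : v ∈ e') : e' ∈ F := by
  classical
  by_contra hF'
  set G := H.deleteEdges (↑F : Set (Sym2 V)) with hG
  have he'G : e' ∈ G.edgeSet := by
    rw [hG, SimpleGraph.edgeSet_deleteEdges]
    exact ⟨he', hF'⟩
  obtain ⟨a, rfl⟩ := Sym2.mem_iff_exists.mp hv
  obtain ⟨b, rfl⟩ := Sym2.mem_iff_exists.mp hv'
  have hadj : G.Adj v a := he
  have hadj' : G.Adj v b := he'G
  obtain ⟨x, y, hxy, hsupp⟩ := hall (G.connectedComponentMk v)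
  have hmem : ∀ z : V, G.connectedComponentMk z = G.connectedComponentMk v →
      z = x ∨ z = y := by
    intro z hz
    have : z ∈ (G.connectedComponentMk v).supp := by
      rw [SimpleGraph.ConnectedComponent.mem_supp_iff]; exact hz
    rw [hsupp] at this
    simpa using this
  have hvm : v = x ∨ v = y := hmem v rfl
  have ham : a = x ∨ a = y := hmem a (SimpleGraph.ConnectedComponent.sound hadj.symm.reachable)
  have hbm : b = x ∨ b = y := hmem b (SimpleGraph.ConnectedComponent.sound hadj'.symm.reachable)
  have hva : v ≠ a := hadj.ne
  have hvb : v ≠ b := hadj'.ne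
  have : a = b := by
    rcases hvm with rfl | rfl
    · rcases ham with rfl | rfl
      · exact absurd rfl hva
      · rcases hbm with rfl | rfl
        · exact absurd rfl hvb
        · rfl
    · rcases ham with rfl | rfl
      · rcases hbm with rfl | rfl
        · rfl
        · exact absurd rfl hvb
      · exact absurd rfl hva
  subst this
  exact hne rfl

/-- If `H ∈ T_k`, witnessed by the set `F` of the `k-1` connecting edges, then
`|F|` is strictly less than the number of isolated `P₂` components of `H \ F`;
hence `H` has no fractional `P₃`-decomposition. -/
theorem inTk_no_frac_p3_decomp [Fintype V] (H : SimpleGraph V) (k : ℕ) (hk : 1 ≤ k)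
    (htree : H.IsTree) (F : Finset (Sym2 V)) (hF : ↑F ⊆ H.edgeSet) (hFcard : F.card = k - 1)
    (hall : ∀ c : (H.deleteEdges ↑F).ConnectedComponent,
      (H.deleteEdges ↑F).IsP2Component c) :
    F.card < Nat.card {c : (H.deleteEdges ↑F).ConnectedComponent //
        (H.deleteEdges ↑F).IsP2Component c} ∧
      ¬ H.HasFracP3Decomp := by
  classical
  set G := H.deleteEdges (↑F : Set (Sym2 V)) with hG
  choose u w hadj hsupp using hall
  have hGsub : G.edgeSet ⊆ H.edgeSet := by
    rw [hG, SimpleGraph.edgeSet_deleteEdges]; exact Set.diff_subset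
  have hGnotF : ∀ {e : Sym2 V}, e ∈ G.edgeSet → e ∉ F := by
    intro e he
    rw [hG, SimpleGraph.edgeSet_deleteEdges] at he
    exact fun h => he.2 h
  have hmem : ∀ (c : G.ConnectedComponent) (z : V), (z = u c ∨ z = w c) →
      G.connectedComponentMk z = c := by
    intro c z hz
    rw [← SimpleGraph.ConnectedComponent.mem_supp_iff, hsupp c]
    rcases hz with rfl | rfl
    · exact Set.mem_insert _ _
    · exact Set.mem_insert_of_mem _ rfl
  set N := (Finset.univ : Finset G.ConnectedComponent).card with hN
  -- number of components equals number of edges of G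
  have hedgecard : N = G.edgeFinset.card := by
    apply Finset.card_bij (fun c _ => s(u c, w c))
    · intro c _
      rw [SimpleGraph.mem_edgeFinset]
      exact hadj c
    · intro c1 _ c2 _ h
      rw [Sym2.eq_iff] at h
      have h2 : u c2 = u c1 ∨ u c2 = w c1 := by
        rcases h with ⟨h1, _⟩ | ⟨_, h2⟩
        · left; exact h1.symm
        · right; exact h2.symm
      have e1 : G.connectedComponentMk (u c2) = c1 := hmem c1 (u c2) h2
      have e2 : G.connectedComponentMk (u c2) = c2 := hmem c2 (u c2) (Or.inl rfl)
      rw [← e1, e2]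
    · intro e he
      induction e using Sym2.ind with
      | _ a b =>
        rw [SimpleGraph.mem_edgeFinset, SimpleGraph.mem_edgeSet] at he
        refine ⟨G.connectedComponentMk a, Finset.mem_univ _, ?_⟩
        have ha : a ∈ (G.connectedComponentMk a).supp := by
          rw [SimpleGraph.ConnectedComponent.mem_supp_iff]
        have hb : b ∈ (G.connectedComponentMk a).supp := by
          rw [SimpleGraph.ConnectedComponent.mem_supp_iff]
          exact SimpleGraph.ConnectedComponent.sound he.symm.reachable
        rw [hsupp (G.connectedComponentMk a)] at ha hb
        simp only [Set.mem_insert_iff, Set.mem_singleton_iff] at ha hb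
        have hab : a ≠ b := he.ne
        rw [Sym2.eq_iff]
        rcases ha with ha | ha
        · rcases hb with hb | hb
          · exact absurd (ha.trans hb.symm) hab
          · left; exact ⟨ha.symm, hb.symm⟩
        · rcases hb with hb | hb
          · right; exact ⟨hb.symm, ha.symm⟩
          · exact absurd (ha.trans hb.symm) hab
  -- number of vertices is twice the number of components
  have hVcard : Fintype.card V = 2 * N := by
    have := Finset.card_eq_sum_card_fiberwise
      (f := G.connectedComponentMk) (s := Finset.univ) (t := Finset.univ)
      (fun x _ => Finset.mem_univ _)
    rw [Finset.card_univ] at this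
    rw [this]
    have hfib : ∀ c : G.ConnectedComponent,
        (Finset.univ.filter fun x => G.connectedComponentMk x = c).card = 2 := by
      intro c
      have : (Finset.univ.filter fun x => G.connectedComponentMk x = c)
          = {u c, w c} := by
        ext x
        simp only [Finset.mem_filter, Finset.mem_univ, true_and, Finset.mem_insert,
          Finset.mem_singleton]
        rw [← SimpleGraph.ConnectedComponent.mem_supp_iff, hsupp c]
        simp
      rw [this, Finset.card_pair (hadj c).ne]
    rw [Finset.sum_congr rfl fun c _ => hfib c, Finset.sum_const, smul_eq_mul, hN]
    ring
  have hFsub : F ⊆ H.edgeFinset := by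
    intro g hg
    rw [SimpleGraph.mem_edgeFinset]
    exact hF hg
  have hGedge : G.edgeFinset = H.edgeFinset \ F := by
    ext e
    rw [SimpleGraph.mem_edgeFinset, Finset.mem_sdiff, SimpleGraph.mem_edgeFinset, hG,
      SimpleGraph.edgeSet_deleteEdges]
    exact Iff.rfl
  have hGcard : G.edgeFinset.card = H.edgeFinset.card - F.card := by
    rw [hGedge, Finset.card_sdiff, Finset.inter_eq_left.mpr hFsub]
  have htreecard : H.edgeFinset.card + 1 = Fintype.card V := htree.card_edgeFinset
  have hFle : F.card ≤ H.edgeFinset.card := Finset.card_le_card hFsub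
  have hFltN : F.card < N := by omega
  have hNat : Nat.card {c : G.ConnectedComponent // G.IsP2Component c} = N := by
    have e : {c : G.ConnectedComponent // G.IsP2Component c} ≃ G.ConnectedComponent :=
      Equiv.subtypeUnivEquiv (fun c => ⟨u c, w c, hadj c, hsupp c⟩)
    rw [Nat.card_congr e, Nat.card_eq_fintype_card, ← Finset.card_univ]
  constructor
  · rw [hNat]; exact hFltN
  -- no fractional P3 decomposition
  rintro ⟨f, hf01, hsum⟩
  set S : Sym2 V → Finset (Sym2 (Sym2 V)) :=
    fun e => Finset.univ.filter (fun K : Sym2 (Sym2 V) => H.IsP3Sub K ∧ e ∈ K) with hS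
  have hsum' : ∀ e ∈ H.edgeSet, ∑ K ∈ S e, f K = 1 := hsum
  -- the sets S e, for e an edge of G, are pairwise disjoint
  have hdisj : (↑G.edgeFinset : Set (Sym2 V)).PairwiseDisjoint S := by
    intro e1 he1 e2 he2 hne
    simp only [Function.onFun]
    rw [Finset.disjoint_left]
    intro K hK1 hK2
    rw [hS, Finset.mem_filter] at hK1 hK2
    obtain ⟨_, hP3, hm1⟩ := hK1
    obtain ⟨_, _, hm2⟩ := hK2
    obtain ⟨a, b, rfl, haH, hbH, hab, v, hva, hvb⟩ := hP3
    rw [Sym2.mem_iff] at hm1 hm2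
    rw [Finset.mem_coe, SimpleGraph.mem_edgeFinset] at he1 he2
    have hv1 : v ∈ e1 := by rcases hm1 with rfl | rfl <;> assumption
    have hv2 : v ∈ e2 := by rcases hm2 with rfl | rfl <;> assumption
    have he2H : e2 ∈ H.edgeSet := hGsub he2
    have : e2 ∈ F := key_in_F H F (fun c => ⟨u c, w c, hadj c, hsupp c⟩) he1 he2H hne.symm hv1 hv2
    exact hGnotF he2 this
  -- every P3 through an isolated edge also goes through an F edge
  have hsub : G.edgeFinset.biUnion S ⊆ F.biUnion S := by
    intro K hK
    rw [Finset.mem_biUnion] at hK ⊢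
    obtain ⟨e, he, hKe⟩ := hK
    rw [hS, Finset.mem_filter] at hKe
    obtain ⟨_, hP3, hm⟩ := hKe
    obtain ⟨a, b, rfl, haH, hbH, hab, v, hva, hvb⟩ := hP3
    rw [SimpleGraph.mem_edgeFinset] at he
    rw [Sym2.mem_iff] at hm
    rcases hm with rfl | rfl
    · have hbF : b ∈ F := key_in_F H F (fun c => ⟨u c, w c, hadj c, hsupp c⟩)
        he hbH (fun h => hab h.symm) hva hvb
      refine ⟨b, hbF, ?_⟩
      rw [hS, Finset.mem_filter]
      exact ⟨Finset.mem_univ _, ⟨e, b, rfl, haH, hbH, hab, v, hva, hvb⟩, by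
        rw [Sym2.mem_iff]; right; rfl⟩
    · have haF : a ∈ F := key_in_F H F (fun c => ⟨u c, w c, hadj c, hsupp c⟩)
        he haH hab hvb hva
      refine ⟨a, haF, ?_⟩
      rw [hS, Finset.mem_filter]
      exact ⟨Finset.mem_univ _, ⟨a, e, rfl, haH, hbH, hab, v, hva, hvb⟩, by
        rw [Sym2.mem_iff]; left; rfl⟩
  have hfnn : ∀ K, 0 ≤ f K := fun K => (hf01 K).1
  have hmain : (N : ℝ) ≤ F.card := by
    calc (N : ℝ) = ∑ e ∈ G.edgeFinset, ∑ K ∈ S e, f K := by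
          rw [Finset.sum_congr rfl fun e he =>
            hsum' e (hGsub (SimpleGraph.mem_edgeFinset.mp he))]
          rw [Finset.sum_const, ← hedgecard]
          simp
      _ = ∑ K ∈ G.edgeFinset.biUnion S, f K := (Finset.sum_biUnion hdisj).symm
      _ ≤ ∑ K ∈ F.biUnion S, f K :=
          Finset.sum_le_sum_of_subset_of_nonneg hsub (fun K _ _ => hfnn K)
      _ ≤ ∑ g ∈ F, ∑ K ∈ S g, f K := sum_biUnion_le_real f hfnn F S
      _ = F.card := by
          rw [Finset.sum_congr rfl fun g hg => hsum' g (hF hg)]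
          simp
  have : N ≤ F.card := by exact_mod_cast hmain
  omega
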